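/- For n ∈ ℕ, a continuous function f on [0,∞) of exponential order, and n-1 < α < n, the Laplace transform of the Caputo fractional derivative of f of order α satisfies L{D_C^α f}(s) = s^α F(s) − Σ_{k=0}^{n-1} s^{α−k−1} f^{(k)}(0), where F(s) = L{f}(s), provided f is n-times continuously differentiable with f^{(n)} of exponential order, and s is real and sufficiently large. -/

import Mathlib

open MeasureTheory intervalIntegral Set Filter


lemma lap_integrable {g : ℝ → ℝ} (hg : Continuous g) {D c s : ℝ} (hD : 0 ≤ D)
    (hbd : ∀ t, 0 ≤ t → |g t| ≤ D * Real.exp (c * t)) (hs : c < s) :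
    IntegrableOn (fun t => Real.exp (-s * t) * g t) (Ioi (0:ℝ)) := by
  apply Integrable.mono' (g := fun t => D * Real.exp (-(s - c) * t))
  · exact (exp_neg_integrableOn_Ioi 0 (by linarith)).const_mul D
  · exact ((Real.continuous_exp.comp (continuous_const.mul continuous_id)).mul hg).aestronglyMeasurable
  · filter_upwards [ae_restrict_mem measurableSet_Ioi] with t ht
    have h1 : |g t| ≤ D * Real.exp (c * t) := hbd t (le_of_lt ht)
    have h2 : Real.exp (-s * t) * Real.exp (c * t) = Real.exp (-(s - c) * t) := by
      rw [← Real.exp_add]; ring_nf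
    calc ‖Real.exp (-s * t) * g t‖ = Real.exp (-s * t) * |g t| := by
          rw [norm_mul, Real.norm_eq_abs, Real.norm_eq_abs, abs_of_pos (Real.exp_pos _)]
      _ ≤ Real.exp (-s * t) * (D * Real.exp (c * t)) := by
          exact mul_le_mul_of_nonneg_left h1 (Real.exp_pos _).le
      _ = D * Real.exp (-(s - c) * t) := by rw [← h2]; ring

lemma lap_tendsto {g : ℝ → ℝ} {D c s : ℝ}
    (hbd : ∀ t, 0 ≤ t → |g t| ≤ D * Real.exp (c * t)) (hs : c < s) :
    Tendsto (fun t => Real.exp (-s * t) * g t) atTop (nhds 0) := by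
  apply squeeze_zero_norm' (a := fun t => D * Real.exp (-(s - c) * t))
  · filter_upwards [eventually_ge_atTop (0:ℝ)] with t ht
    have h1 := hbd t ht
    have h2 : Real.exp (-s * t) * Real.exp (c * t) = Real.exp (-(s - c) * t) := by
      rw [← Real.exp_add]; ring_nf
    calc ‖Real.exp (-s * t) * g t‖ = Real.exp (-s * t) * |g t| := by
          rw [norm_mul, Real.norm_eq_abs, Real.norm_eq_abs, abs_of_pos (Real.exp_pos _)]
      _ ≤ Real.exp (-s * t) * (D * Real.exp (c * t)) :=
          mul_le_mul_of_nonneg_left h1 (Real.exp_pos _).le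
      _ = D * Real.exp (-(s - c) * t) := by rw [← h2]; ring
  · rw [show (0:ℝ) = D * 0 by ring]
    apply Tendsto.const_mul
    exact Real.tendsto_exp_atBot.comp ((tendsto_const_mul_atBot_of_neg (by linarith)).mpr tendsto_id)

lemma lap_ibp {g g' : ℝ → ℝ} (hgc : Continuous g) (hdc : Continuous g')
    (hder : ∀ t : ℝ, HasDerivAt g (g' t) t) {D c s : ℝ} (hD : 0 ≤ D)
    (hbd : ∀ t, 0 ≤ t → |g t| ≤ D * Real.exp (c * t))
    (hbd' : ∀ t, 0 ≤ t → |g' t| ≤ D * Real.exp (c * t)) (hs : c < s) :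
    ∫ t in Ioi (0:ℝ), Real.exp (-s*t) * g' t =
    s * (∫ t in Ioi (0:ℝ), Real.exp (-s*t) * g t) - g 0 := by
  have int1 : IntegrableOn (fun t => Real.exp (-s*t) * g' t) (Ioi (0:ℝ)) :=
    lap_integrable hdc hD hbd' hs
  have int2 : IntegrableOn (fun t => Real.exp (-s*t) * g t) (Ioi (0:ℝ)) :=
    lap_integrable hgc hD hbd hs
  have key : ∫ t in Ioi (0:ℝ),
      (Real.exp (-s*t) * g' t - s * (Real.exp (-s*t) * g t)) =
      0 - (Real.exp (-s*0) * g 0) := by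
    apply integral_Ioi_of_hasDerivAt_of_tendsto' (f := fun t => Real.exp (-s*t) * g t)
    · intro t _
      have h1 : HasDerivAt (fun x : ℝ => Real.exp (-s*x)) (Real.exp (-s*t) * (-s)) t := by
        simpa [Function.comp_def] using
          (Real.hasDerivAt_exp (-s*t)).comp t ((hasDerivAt_id t).const_mul (-s))
      have : HasDerivAt (fun x => Real.exp (-s*x) * g x) _ t := h1.mul (hder t)
      exact this.congr_deriv (by ring)
    · exact int1.sub (int2.const_mul s)
    · exact lap_tendsto hbd hs
  rw [integral_sub int1 (int2.const_mul s), MeasureTheory.integral_const_mul] at key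
  simp only [mul_zero, neg_zero, Real.exp_zero, one_mul, zero_sub] at key
  linarith

lemma deriv_bound (n : ℕ) (f : ℝ → ℝ) (hf : ContDiff ℝ n f)
    (C a : ℝ) (hC : 0 ≤ C)
    (hfnord : ∀ t : ℝ, 0 ≤ t → |iteratedDeriv n f t| ≤ C * Real.exp (a * t)) :
    ∃ c D : ℝ, 1 ≤ c ∧ 0 ≤ D ∧
      ∀ k ≤ n, ∀ t : ℝ, 0 ≤ t → |iteratedDeriv k f t| ≤ D * Real.exp (c * t) := by
  suffices h : ∀ m : ℕ, ∃ c D : ℝ, 1 ≤ c ∧ 0 ≤ D ∧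
      ∀ k, n - m ≤ k → k ≤ n → ∀ t : ℝ, 0 ≤ t →
        |iteratedDeriv k f t| ≤ D * Real.exp (c * t) by
    obtain ⟨c, D, hc, hD, hb⟩ := h n
    exact ⟨c, D, hc, hD, fun k hk t ht => hb k (by omega) hk t ht⟩
  intro m
  induction m with
  | zero =>
    refine ⟨max a 1, C, le_max_right _ _, hC, fun k hk1 hk2 t ht => ?_⟩
    have hk : k = n := by omega
    rw [hk]
    calc |iteratedDeriv n f t| ≤ C * Real.exp (a * t) := hfnord t ht
      _ ≤ C * Real.exp (max a 1 * t) := by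
        apply mul_le_mul_of_nonneg_left _ hC
        exact Real.exp_le_exp.mpr (mul_le_mul_of_nonneg_right (le_max_left _ _) ht)
  | succ m ih =>
    obtain ⟨c, D, hc, hD, hb⟩ := ih
    by_cases hm : n ≤ m
    · exact ⟨c, D, hc, hD, fun k hk1 hk2 => hb k (by omega) hk2⟩
    refine ⟨c + 1, max D (|iteratedDeriv (n - (m+1)) f 0| + D), by linarith,
      le_max_of_le_right (by positivity), fun k hk1 hk2 t ht => ?_⟩
    by_cases hkk : k = n - (m+1) ∧ ¬ (n - m ≤ k)
    · obtain ⟨hkk, hkk2⟩ := hkk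
      have hkn : k + 1 ≤ n := by omega
      have hbsucc : ∀ x : ℝ, 0 ≤ x → |iteratedDeriv (k+1) f x| ≤ D * Real.exp (c * x) :=
        fun x hx => hb (k+1) (by omega) hkn x hx
      have hdiff : ∀ x : ℝ, HasDerivAt (iteratedDeriv k f) (iteratedDeriv (k+1) f x) x := by
        intro x
        rw [iteratedDeriv_succ]
        exact ((hf.differentiable_iteratedDeriv k
          (by exact_mod_cast Nat.lt_of_lt_of_le (Nat.lt_succ_self k) hkn)) x).hasDerivAt
      have hcont : Continuous (iteratedDeriv (k+1) f) :=
        hf.continuous_iteratedDeriv (k+1) (by exact_mod_cast hkn)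
      have hftc : iteratedDeriv k f t = iteratedDeriv k f 0 +
          ∫ τ in (0:ℝ)..t, iteratedDeriv (k+1) f τ := by
        rw [intervalIntegral.integral_eq_sub_of_hasDerivAt (fun x _ => hdiff x)
          (hcont.intervalIntegrable 0 t)]
        ring
      have hint : |∫ τ in (0:ℝ)..t, iteratedDeriv (k+1) f τ| ≤ D * Real.exp (c*t) * t := by
        have := intervalIntegral.norm_integral_le_of_norm_le_const
          (C := D * Real.exp (c*t)) (a := (0:ℝ)) (b := t)
          (f := fun τ => iteratedDeriv (k+1) f τ) ?_
        · simpa [abs_of_nonneg ht] using this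
        · intro x hx
          rw [uIoc_of_le ht] at hx
          calc ‖iteratedDeriv (k+1) f x‖ ≤ D * Real.exp (c * x) := hbsucc x hx.1.le
            _ ≤ D * Real.exp (c * t) := by
              apply mul_le_mul_of_nonneg_left _ hD
              exact Real.exp_le_exp.mpr (mul_le_mul_of_nonneg_left hx.2 (by linarith))
      have h1t : t ≤ Real.exp t := (Real.add_one_le_exp t).trans' (by linarith)
      calc |iteratedDeriv k f t| ≤ |iteratedDeriv k f 0| + D * Real.exp (c*t) * t := by
            rw [hftc]; exact (abs_add_le _ _).trans (by gcongr)
        _ ≤ |iteratedDeriv k f 0| * Real.exp ((c+1)*t) + D * Real.exp ((c+1)*t) := by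
            have e1 : Real.exp (c*t) * t ≤ Real.exp ((c+1)*t) := by
              calc Real.exp (c*t) * t ≤ Real.exp (c*t) * Real.exp t :=
                    mul_le_mul_of_nonneg_left h1t (Real.exp_pos _).le
                _ = Real.exp ((c+1)*t) := by rw [← Real.exp_add]; ring_nf
            have e2 : (1:ℝ) ≤ Real.exp ((c+1)*t) := by
              rw [← Real.exp_zero]; exact Real.exp_le_exp.mpr (by positivity)
            have := mul_le_mul_of_nonneg_left e1 hD
            nlinarith [abs_nonneg (iteratedDeriv k f 0)]
        _ = (|iteratedDeriv k f 0| + D) * Real.exp ((c+1)*t) := by ring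
        _ ≤ max D (|iteratedDeriv (n - (m+1)) f 0| + D) * Real.exp ((c+1)*t) := by
            rw [hkk] at *
            exact mul_le_mul_of_nonneg_right (le_max_right _ _) (Real.exp_pos _).le
    · have hge : n - m ≤ k := by omega
      calc |iteratedDeriv k f t| ≤ D * Real.exp (c * t) := hb k hge hk2 t ht
        _ ≤ max D (|iteratedDeriv (n - (m+1)) f 0| + D) * Real.exp ((c+1)*t) := by
          apply mul_le_mul (le_max_left _ _) _ (Real.exp_pos _).le
            (le_trans hD (le_max_left _ _))
          exact Real.exp_le_exp.mpr (by nlinarith)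

lemma lap_deriv (n : ℕ) (f : ℝ → ℝ) (hf : ContDiff ℝ n f) {D c s : ℝ} (hD : 0 ≤ D)
    (hbd : ∀ k, k ≤ n → ∀ t : ℝ, 0 ≤ t → |iteratedDeriv k f t| ≤ D * Real.exp (c * t))
    (hs : c < s) :
    ∫ t in Ioi (0:ℝ), Real.exp (-s*t) * iteratedDeriv n f t =
    s^n * (∫ t in Ioi (0:ℝ), Real.exp (-s*t) * f t) -
      ∑ j ∈ Finset.range n, s^j * iteratedDeriv (n-1-j) f 0 := by
  suffices h : ∀ m, m ≤ n → (∫ t in Ioi (0:ℝ), Real.exp (-s*t) * iteratedDeriv n f t) =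
      s^m * (∫ t in Ioi (0:ℝ), Real.exp (-s*t) * iteratedDeriv (n-m) f t) -
      ∑ j ∈ Finset.range m, s^j * iteratedDeriv (n-1-j) f 0 by
    have := h n le_rfl
    simpa using this
  intro m
  induction m with
  | zero => simp
  | succ m ih =>
    intro hm
    have h1 := ih (by omega)
    have hnm : n - m = (n - (m+1)) + 1 := by omega
    have hk1 : n - (m+1) + 1 ≤ n := by omega
    have ibp : (∫ t in Ioi (0:ℝ), Real.exp (-s*t) * iteratedDeriv (n-m) f t) =
        s * (∫ t in Ioi (0:ℝ), Real.exp (-s*t) * iteratedDeriv (n-(m+1)) f t) -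
          iteratedDeriv (n-(m+1)) f 0 := by
      rw [hnm, iteratedDeriv_succ]
      apply lap_ibp
        (hgc := hf.continuous_iteratedDeriv _ (by exact_mod_cast le_trans (Nat.le_succ _) hk1))
        (hdc := by rw [← iteratedDeriv_succ]
                   exact hf.continuous_iteratedDeriv _ (by exact_mod_cast hk1))
        (hder := fun t => ((hf.differentiable_iteratedDeriv _
          (by exact_mod_cast Nat.lt_of_lt_of_le (Nat.lt_succ_self _) hk1)) t).hasDerivAt)
        (hD := hD) (hs := hs)
      · exact fun t ht => hbd _ (by omega) t ht
      · intro t ht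
        rw [← iteratedDeriv_succ]
        exact hbd _ (by omega) t ht
    rw [h1, ibp, Finset.sum_range_succ]
    have hidx : n - 1 - m = n - (m+1) := by omega
    rw [hidx]
    ring


lemma conv_fubini {g : ℝ → ℝ} (hg : Continuous g) {D c s β : ℝ} (hD : 0 ≤ D) (hc : 0 < c)
    (hbd : ∀ t, 0 ≤ t → |g t| ≤ D * Real.exp (c * t)) (hs : c < s)
    (hβ0 : 0 < β) (hβ1 : β < 1) :
    (∫ t in Ioi (0:ℝ), Real.exp (-s*t) * (∫ τ in (0:ℝ)..t, g τ * (t - τ) ^ (β - 1))) =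
    (∫ u in Ioi (0:ℝ), u ^ (β-1) * Real.exp (-(s*u))) *
      (∫ τ in Ioi (0:ℝ), Real.exp (-s*τ) * g τ) := by
  set Φ : ℝ → ℝ → ℝ := fun t τ => if τ < t then Real.exp (-s*t) * (g τ * (t-τ)^(β-1)) else 0
    with hΦ
  have hscpos : (0:ℝ) < s - c := by linarith
  -- measurability of the kernel
  have hrm : ∀ t : ℝ, Measurable (fun τ : ℝ => (t - τ)^(β-1)) := by
    intro t; fun_prop
  -- measurability on the product
  have hFmeas : Measurable (fun p : ℝ × ℝ =>
      Real.exp (-s*p.1) * (g p.2 * (p.1-p.2)^(β-1))) := by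
    have : Measurable (fun p : ℝ × ℝ => (p.1 - p.2)^(β-1)) := by fun_prop
    exact ((Real.measurable_exp.comp (measurable_fst.const_mul (-s))).mul
      ((hg.measurable.comp measurable_snd).mul this))
  have huncurry : Function.uncurry Φ =
      Set.indicator {p : ℝ × ℝ | p.2 < p.1}
        (fun p => Real.exp (-s*p.1) * (g p.2 * (p.1-p.2)^(β-1))) := by
    funext p
    simp only [Function.uncurry, hΦ, Set.indicator_apply, mem_setOf_eq]
  have hfmeas : AEStronglyMeasurable (Function.uncurry Φ)
      ((volume.restrict (Ioi (0:ℝ))).prod (volume.restrict (Ioi (0:ℝ)))) := by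
    rw [huncurry]
    exact (hFmeas.indicator (measurableSet_lt measurable_snd measurable_fst)).aestronglyMeasurable
  -- kernel integrable on Ioo 0 t
  have hker : ∀ t : ℝ, 0 < t → IntegrableOn (fun τ => (t-τ)^(β-1)) (Ioo 0 t) := by
    intro t ht
    have h1 : IntervalIntegrable (fun x : ℝ => x^(β-1)) volume 0 t :=
      intervalIntegrable_rpow' (by linarith)
    have h2 := h1.comp_sub_left t
    simp only [sub_zero, sub_self] at h2
    have h3 := h2.symm
    rwa [intervalIntegrable_iff_integrableOn_Ioo_of_le ht.le] at h3
  -- columns integrable on Ioo 0 t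
  have hcol' : ∀ t : ℝ, 0 < t →
      IntegrableOn (fun τ => Real.exp (-s*t) * (g τ * (t-τ)^(β-1))) (Ioo 0 t) := by
    intro t ht
    apply Integrable.mono'
      (g := fun τ => Real.exp (-s*t) * (D * Real.exp (c*t)) * (t-τ)^(β-1))
      (((hker t ht).const_mul _))
    · exact ((measurable_const.mul (hg.measurable.mul (hrm t))).aestronglyMeasurable)
    · filter_upwards [ae_restrict_mem measurableSet_Ioo] with τ hτ
      have h0 : (0:ℝ) ≤ (t - τ)^(β-1) := Real.rpow_nonneg (by linarith [hτ.2]) _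
      have h1 : |g τ| ≤ D * Real.exp (c * τ) := hbd τ hτ.1.le
      have h2 : D * Real.exp (c * τ) ≤ D * Real.exp (c * t) :=
        mul_le_mul_of_nonneg_left
          (Real.exp_le_exp.mpr (mul_le_mul_of_nonneg_left hτ.2.le hc.le)) hD
      calc ‖Real.exp (-s*t) * (g τ * (t-τ)^(β-1))‖
          = Real.exp (-s*t) * (|g τ| * (t-τ)^(β-1)) := by
            rw [norm_mul, norm_mul, Real.norm_eq_abs, Real.norm_eq_abs, Real.norm_eq_abs,
              abs_of_pos (Real.exp_pos _), abs_of_nonneg h0]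
        _ ≤ Real.exp (-s*t) * ((D * Real.exp (c*t)) * (t-τ)^(β-1)) := by
            apply mul_le_mul_of_nonneg_left _ (Real.exp_pos _).le
            exact mul_le_mul_of_nonneg_right (h1.trans h2) h0
        _ = Real.exp (-s*t) * (D * Real.exp (c*t)) * (t-τ)^(β-1) := by ring
  -- column indicator form
  have hind : ∀ t : ℝ, Φ t =
      (Iio t).indicator (fun τ => Real.exp (-s*t) * (g τ * (t-τ)^(β-1))) := by
    intro t; funext τ
    simp only [hΦ, Set.indicator_apply, mem_Iio]
  have hIioIoi : ∀ t : ℝ, Iio t ∩ Ioi (0:ℝ) = Ioo 0 t := by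
    intro t; ext x; simp only [mem_inter_iff, mem_Iio, mem_Ioi, mem_Ioo]; tauto
  have hcol : ∀ t : ℝ, Integrable (Φ t) (volume.restrict (Ioi (0:ℝ))) := by
    intro t
    by_cases ht : 0 < t
    · rw [hind t, integrable_indicator_iff measurableSet_Iio, IntegrableOn,
        Measure.restrict_restrict measurableSet_Iio, hIioIoi t]
      exact hcol' t ht
    · apply (integrable_zero _ _ _).congr
      filter_upwards [ae_restrict_mem measurableSet_Ioi] with τ hτ
      have : ¬ τ < t := by simp only [mem_Ioi] at hτ; linarith [not_lt.mp ht]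
      simp only [hΦ, if_neg this, Pi.zero_apply]
  -- kernel interval integral value
  have hKval : ∀ t : ℝ, 0 < t → (∫ τ in (0:ℝ)..t, (t-τ)^(β-1)) = t^β / β := by
    intro t ht
    rw [intervalIntegral.integral_comp_sub_left (fun x => x^(β-1)) t]
    simp only [sub_self, sub_zero]
    rw [integral_rpow (Or.inl (by linarith))]
    rw [Real.zero_rpow (by linarith), sub_add_cancel]
    ring_nf
  have hKvalIoo : ∀ t : ℝ, 0 < t → (∫ τ in Ioo (0:ℝ) t, (t-τ)^(β-1)) = t^β / β := by
    intro t ht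
    rw [← integral_Ioc_eq_integral_Ioo, ← intervalIntegral.integral_of_le ht.le]
    exact hKval t ht
  -- column values
  have hcol_val : ∀ t : ℝ, 0 < t → (∫ τ in Ioi (0:ℝ), Φ t τ) =
      Real.exp (-s*t) * ∫ τ in (0:ℝ)..t, g τ * (t-τ)^(β-1) := by
    intro t ht
    rw [hind t, MeasureTheory.integral_indicator measurableSet_Iio,
      Measure.restrict_restrict measurableSet_Iio, hIioIoi t,
      intervalIntegral.integral_of_le ht.le, integral_Ioc_eq_integral_Ioo, MeasureTheory.integral_const_mul]
  -- norm column bound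
  have hnormbd : ∀ t : ℝ, 0 < t → (∫ τ in Ioi (0:ℝ), ‖Φ t τ‖) ≤
      (D/β) * (t^β * Real.exp (-(s-c)*t)) := by
    intro t ht
    have hnorm_ind : (fun τ => ‖Φ t τ‖) =
        (Iio t).indicator (fun τ => ‖Real.exp (-s*t) * (g τ * (t-τ)^(β-1))‖) := by
      funext τ
      rw [hind t]
      rcases lt_or_ge τ t with h | h
      · simp [Set.indicator_apply, mem_Iio, h]
      · simp [Set.indicator_apply, mem_Iio, not_lt.mpr h]
    rw [hnorm_ind, MeasureTheory.integral_indicator measurableSet_Iio,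
      Measure.restrict_restrict measurableSet_Iio, hIioIoi t]
    have step : (∫ τ in Ioo (0:ℝ) t, ‖Real.exp (-s*t) * (g τ * (t-τ)^(β-1))‖) ≤
        ∫ τ in Ioo (0:ℝ) t, Real.exp (-s*t) * (D * Real.exp (c*t)) * (t-τ)^(β-1) := by
      apply setIntegral_mono_on ((hcol' t ht).norm) (((hker t ht).const_mul _))
        measurableSet_Ioo
      intro τ hτ
      have h0 : (0:ℝ) ≤ (t - τ)^(β-1) := Real.rpow_nonneg (by linarith [hτ.2]) _
      have h1 : |g τ| ≤ D * Real.exp (c * τ) := hbd τ hτ.1.le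
      have h2 : D * Real.exp (c * τ) ≤ D * Real.exp (c * t) :=
        mul_le_mul_of_nonneg_left
          (Real.exp_le_exp.mpr (mul_le_mul_of_nonneg_left hτ.2.le hc.le)) hD
      calc ‖Real.exp (-s*t) * (g τ * (t-τ)^(β-1))‖
          = Real.exp (-s*t) * (|g τ| * (t-τ)^(β-1)) := by
            rw [norm_mul, norm_mul, Real.norm_eq_abs, Real.norm_eq_abs, Real.norm_eq_abs,
              abs_of_pos (Real.exp_pos _), abs_of_nonneg h0]
        _ ≤ Real.exp (-s*t) * (D * Real.exp (c*t)) * (t-τ)^(β-1) := by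
            rw [mul_assoc]
            apply mul_le_mul_of_nonneg_left _ (Real.exp_pos _).le
            exact mul_le_mul_of_nonneg_right (h1.trans h2) h0
    calc (∫ τ in Ioo (0:ℝ) t, ‖Real.exp (-s*t) * (g τ * (t-τ)^(β-1))‖)
        ≤ ∫ τ in Ioo (0:ℝ) t, Real.exp (-s*t) * (D * Real.exp (c*t)) * (t-τ)^(β-1) := step
      _ = Real.exp (-s*t) * (D * Real.exp (c*t)) * (t^β/β) := by
          rw [MeasureTheory.integral_const_mul, hKvalIoo t ht]
      _ = (D/β) * (t^β * Real.exp (-(s-c)*t)) := by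
          rw [show Real.exp (-(s-c)*t) = Real.exp (-s*t) * Real.exp (c*t) by
            rw [← Real.exp_add]; ring_nf]
          ring
  -- integrability of norm-columns in t
  have hdom : IntegrableOn (fun t : ℝ => (D/β) * (t^β * Real.exp (-(s-c)*t))) (Ioi 0) := by
    have h0 := integrableOn_rpow_mul_exp_neg_mul_rpow (p := 1) (s := β) (b := s - c)
      (by linarith) zero_lt_one hscpos
    simp_rw [Real.rpow_one] at h0
    exact h0.const_mul _
  have hint_norm : Integrable (fun t => ∫ τ in Ioi (0:ℝ), ‖Φ t τ‖)
      (volume.restrict (Ioi (0:ℝ))) := by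
    apply Integrable.mono' hdom (hfmeas.norm.integral_prod_right')
    filter_upwards [ae_restrict_mem measurableSet_Ioi] with t ht
    have hnn : 0 ≤ ∫ τ in Ioi (0:ℝ), ‖Φ t τ‖ :=
      integral_nonneg (fun τ => norm_nonneg _)
    simp only [Function.uncurry_apply_pair]
    rw [Real.norm_eq_abs, abs_of_nonneg hnn]
    exact hnormbd t ht
  -- product integrability
  have hprod : Integrable (Function.uncurry Φ)
      ((volume.restrict (Ioi (0:ℝ))).prod (volume.restrict (Ioi (0:ℝ)))) := by
    rw [integrable_prod_iff hfmeas]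
    exact ⟨Filter.Eventually.of_forall hcol, hint_norm⟩
  -- row values
  have hrow_val : ∀ τ : ℝ, 0 < τ → (∫ t in Ioi (0:ℝ), Φ t τ) =
      (g τ * Real.exp (-s*τ)) * ∫ u in Ioi (0:ℝ), u^(β-1) * Real.exp (-(s*u)) := by
    intro τ hτ
    have hrow_ind : (fun t => Φ t τ) =
        (Ioi τ).indicator (fun t => Real.exp (-s*t) * (g τ * (t-τ)^(β-1))) := by
      funext t
      simp only [hΦ, Set.indicator_apply, mem_Ioi]
    rw [hrow_ind, MeasureTheory.integral_indicator measurableSet_Ioi,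
      Measure.restrict_restrict measurableSet_Ioi,
      inter_eq_left.mpr (Ioi_subset_Ioi hτ.le)]
    -- shift by τ
    have hshift : (∫ t in Ioi τ, Real.exp (-s*t) * (g τ * (t-τ)^(β-1))) =
        ∫ u in Ioi (0:ℝ), Real.exp (-s*(u+τ)) * (g τ * u^(β-1)) := by
      rw [← MeasureTheory.integral_indicator measurableSet_Ioi, ← MeasureTheory.integral_indicator measurableSet_Ioi]
      rw [← integral_add_right_eq_self
        (fun x => (Ioi τ).indicator (fun t => Real.exp (-s*t) * (g τ * (t-τ)^(β-1))) x) τ]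
      congr 1
      funext x
      rcases lt_or_ge 0 x with h | h
      · have h2 : τ < x + τ := by linarith
        simp only [Set.indicator_apply, mem_Ioi, h, h2, if_pos, add_sub_cancel_right]
      · have h2 : ¬ τ < x + τ := by linarith
        have h3 : ¬ 0 < x := not_lt.mpr h
        simp only [Set.indicator_apply, mem_Ioi, h2, h3, if_neg, not_false_iff]
    rw [hshift]
    have : ∀ u : ℝ, Real.exp (-s*(u+τ)) * (g τ * u^(β-1)) =
        (g τ * Real.exp (-s*τ)) * (u^(β-1) * Real.exp (-(s*u))) := by
      intro u
      rw [show Real.exp (-s*(u+τ)) = Real.exp (-(s*u)) * Real.exp (-s*τ) by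
        rw [← Real.exp_add]; ring_nf]
      ring
    simp_rw [this]
    rw [MeasureTheory.integral_const_mul]
  -- put it together
  calc (∫ t in Ioi (0:ℝ), Real.exp (-s*t) * (∫ τ in (0:ℝ)..t, g τ * (t - τ) ^ (β - 1)))
      = ∫ t in Ioi (0:ℝ), ∫ τ in Ioi (0:ℝ), Φ t τ :=
        setIntegral_congr_fun measurableSet_Ioi (fun t ht => (hcol_val t ht).symm)
    _ = ∫ τ in Ioi (0:ℝ), ∫ t in Ioi (0:ℝ), Φ t τ := integral_integral_swap hprod
    _ = ∫ τ in Ioi (0:ℝ), (∫ u in Ioi (0:ℝ), u^(β-1) * Real.exp (-(s*u))) *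
          (Real.exp (-s*τ) * g τ) := by
        apply setIntegral_congr_fun measurableSet_Ioi
        intro τ hτ
        show (∫ t in Ioi (0:ℝ), Φ t τ) = _
        rw [hrow_val τ hτ]
        ring
    _ = (∫ u in Ioi (0:ℝ), u ^ (β-1) * Real.exp (-(s*u))) *
        (∫ τ in Ioi (0:ℝ), Real.exp (-s*τ) * g τ) := MeasureTheory.integral_const_mul _ _

theorem laplace_caputo (n : ℕ) (α : ℝ) (hn : (n : ℝ) - 1 < α) (hα : α < n)
    (f : ℝ → ℝ) (hf : ContDiff ℝ n f)
    (C a : ℝ) (hC : 0 ≤ C)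
    (hford : ∀ t : ℝ, 0 ≤ t → |f t| ≤ C * Real.exp (a * t))
    (hfnord : ∀ t : ℝ, 0 ≤ t → |iteratedDeriv n f t| ≤ C * Real.exp (a * t)) :
    ∃ s₀ : ℝ, ∀ s : ℝ, s₀ < s →
      (∫ t in Ioi (0:ℝ), Real.exp (-s * t) *
        ((1 / Real.Gamma (n - α)) *
          ∫ τ in (0:ℝ)..t, iteratedDeriv n f τ / (t - τ) ^ (α + 1 - n))) =
      s ^ α * (∫ t in Ioi (0:ℝ), Real.exp (-s * t) * f t) -
        ∑ k ∈ Finset.range n, s ^ (α - k - 1) * iteratedDeriv k f 0 := by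
  obtain ⟨c, D, hc1, hD, hbdall⟩ := deriv_bound n f hf C a hC hfnord
  refine ⟨c, fun s hs => ?_⟩
  set β : ℝ := (n:ℝ) - α with hβ
  have hβ0 : 0 < β := by simp only [hβ]; linarith
  have hβ1 : β < 1 := by simp only [hβ]; linarith
  have hs0 : 0 < s := by linarith
  have hgc : Continuous (iteratedDeriv n f) := hf.continuous_iteratedDeriv n le_rfl
  have hbd_g : ∀ t, 0 ≤ t → |iteratedDeriv n f t| ≤ D * Real.exp (c * t) := hbdall n le_rfl
  have hΓpos : 0 < Real.Gamma β := Real.Gamma_pos_of_pos hβ0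
  -- step 1: rewrite the integrand
  have step1 : (∫ t in Ioi (0:ℝ), Real.exp (-s * t) *
        ((1 / Real.Gamma ((n:ℝ) - α)) *
          ∫ τ in (0:ℝ)..t, iteratedDeriv n f τ / (t - τ) ^ (α + 1 - n))) =
      (1 / Real.Gamma β) * ∫ t in Ioi (0:ℝ),
        Real.exp (-s*t) * (∫ τ in (0:ℝ)..t, iteratedDeriv n f τ * (t - τ) ^ (β - 1)) := by
    rw [← MeasureTheory.integral_const_mul]
    apply setIntegral_congr_fun measurableSet_Ioi
    intro t ht
    have ht0 : (0:ℝ) ≤ t := (mem_Ioi.mp ht).le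
    have hinner : (∫ τ in (0:ℝ)..t, iteratedDeriv n f τ / (t - τ) ^ (α + 1 - (n:ℝ))) =
        ∫ τ in (0:ℝ)..t, iteratedDeriv n f τ * (t - τ) ^ (β - 1) := by
      apply intervalIntegral.integral_congr
      intro τ hτ
      rw [uIcc_of_le ht0] at hτ
      show iteratedDeriv n f τ / (t - τ) ^ (α + 1 - (n:ℝ)) =
        iteratedDeriv n f τ * (t - τ) ^ (β - 1)
      rcases lt_or_eq_of_le hτ.2 with h | h
      · have hpos : 0 < t - τ := by linarith
        have hexp : β - 1 = -(α + 1 - n) := by simp only [hβ]; ring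
        rw [hexp, Real.rpow_neg hpos.le, div_eq_mul_inv]
      · rw [h, sub_self]
        rw [Real.zero_rpow (by linarith : α + 1 - (n:ℝ) ≠ 0),
          Real.zero_rpow (by simp only [hβ]; intro hcon; linarith [sub_eq_zero.mp hcon] : β - 1 ≠ 0)]
        simp
    show Real.exp (-s * t) *
        ((1 / Real.Gamma ((n:ℝ) - α)) *
          ∫ τ in (0:ℝ)..t, iteratedDeriv n f τ / (t - τ) ^ (α + 1 - n)) =
      (1 / Real.Gamma β) *
        (Real.exp (-s*t) * ∫ τ in (0:ℝ)..t, iteratedDeriv n f τ * (t - τ) ^ (β - 1))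
    rw [hinner]
    ring
  rw [step1, conv_fubini hgc hD (by linarith) hbd_g hs hβ0 hβ1,
    Real.integral_rpow_mul_exp_neg_mul_Ioi hβ0 hs0,
    lap_deriv n f hf hD hbdall hs]
  have h1s : (1/s)^β = s^(α - (n:ℝ)) := by
    rw [one_div, Real.inv_rpow hs0.le, ← Real.rpow_neg hs0.le]
    congr 1
    simp only [hβ]; ring
  rw [h1s]
  have hcollapse : ∀ L : ℝ, 1/Real.Gamma β * (s^(α-(n:ℝ)) * Real.Gamma β * L)
      = s^(α-(n:ℝ)) * L := by
    intro L; field_simp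
  rw [hcollapse, mul_sub, Finset.mul_sum]
  congr 1
  · rw [← mul_assoc, ← Real.rpow_natCast s n, ← Real.rpow_add hs0]
    congr 2
    ring
  · rw [← Finset.sum_range_reflect (fun k => s ^ (α - (k:ℝ) - 1) * iteratedDeriv k f 0) n]
    apply Finset.sum_congr rfl
    intro j hj
    have hj' := Finset.mem_range.mp hj
    show s^(α-(n:ℝ)) * (s^j * iteratedDeriv (n-1-j) f 0) =
      s ^ (α - ((n-1-j:ℕ):ℝ) - 1) * iteratedDeriv (n-1-j) f 0
    have hcast : ((n - 1 - j:ℕ):ℝ) = (n:ℝ) - 1 - (j:ℝ) := by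
      rw [Nat.cast_sub (by omega : j ≤ n - 1), Nat.cast_sub (by omega : 1 ≤ n)]
      norm_num
    have hpow : s^(α-(n:ℝ)) * s^(j:ℕ) = s^(α - ((n-1-j:ℕ):ℝ) - 1) := by
      rw [← Real.rpow_natCast s j, ← Real.rpow_add hs0, hcast]
      congr 1
      ring
    rw [← mul_assoc, hpow]
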